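/- Fix ε, J₁, J₂ ∈ ℝ and define the following ℂ-linear operators on the polynomial ring ℂ[X]: L₁p = p′; L₂p = i(p′ + εXp); L₃p = i(X p′ + (ε/2)X²p + J₁p); L₄p = iJ₂ p, where p′ denotes the formal derivative and i = √−1. Then these operators realize the λ-representation of the one-dimensional central extension of e(2) ⊕ ℝ by the 2-cocycle e¹∧e² (rescaled by ε): [L₁,L₂] = iε·id, [L₁,L₃] = L₂, [L₂,L₃] = −L₁, and [Lₐ,L₄] = 0 for a = 1, 2, 3, where [A,B] = AB − BA. -/
import Mathlib


noncomputable section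

open Polynomial

/-- The λ-representation operator `ℓ₁ = ∂_q` on `ℂ[X]`. -/
def L1 (p : ℂ[X]) : ℂ[X] := derivative p

/-- The λ-representation operator `ℓ₂ = i(∂_q + εq)` on `ℂ[X]`. -/
def L2 (ε : ℝ) (p : ℂ[X]) : ℂ[X] :=
  Complex.I • (derivative p + (ε : ℂ) • (X * p))

/-- The λ-representation operator `ℓ₃ = i(q∂_q + (ε/2)q² + J₁)` on `ℂ[X]`. -/
def L3 (ε J₁ : ℝ) (p : ℂ[X]) : ℂ[X] :=
  Complex.I • (X * derivative p + ((ε : ℂ) / 2) • (X ^ 2 * p) + (J₁ : ℂ) • p)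

/-- The λ-representation operator `ℓ₄ = iJ₂` on `ℂ[X]`. -/
def L4 (J₂ : ℝ) (p : ℂ[X]) : ℂ[X] := (Complex.I * (J₂ : ℂ)) • p

/-- the operators `ℓ₁, ℓ₂, ℓ₃, ℓ₄` realize the λ-representation of the
one-dimensional central extension of `e(2) ⊕ ℝ` by the 2-cocycle `e¹∧e²` (rescaled
by the charge `ε`): `[ℓ₁,ℓ₂] = iε·id`, `[ℓ₁,ℓ₃] = ℓ₂`, `[ℓ₂,ℓ₃] = −ℓ₁`,
`[ℓₐ,ℓ₄] = 0` for `a = 1,2,3`. -/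
theorem lambda_representation_commutators (ε J₁ J₂ : ℝ) :
    (∀ p : ℂ[X], L1 (L2 ε p) - L2 ε (L1 p) = (Complex.I * (ε : ℂ)) • p) ∧
    (∀ p : ℂ[X], L1 (L3 ε J₁ p) - L3 ε J₁ (L1 p) = L2 ε p) ∧
    (∀ p : ℂ[X], L2 ε (L3 ε J₁ p) - L3 ε J₁ (L2 ε p) = -L1 p) ∧
    (∀ p : ℂ[X], L1 (L4 J₂ p) - L4 J₂ (L1 p) = 0) ∧
    (∀ p : ℂ[X], L2 ε (L4 J₂ p) - L4 J₂ (L2 ε p) = 0) ∧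
    (∀ p : ℂ[X], L3 ε J₁ (L4 J₂ p) - L4 J₂ (L3 ε J₁ p) = 0) := by
  have h : (C ((ε:ℂ) / 2) : ℂ[X]) * C 2 = C (ε:ℂ) := by
    rw [← map_mul]; congr 1; ring
  have hI : (C Complex.I : ℂ[X]) * C Complex.I = -1 := by
    rw [← map_mul]; simp [Complex.I_mul_I]
  refine ⟨?_, ?_, ?_, ?_, ?_, ?_⟩ <;> intro p <;>
    simp only [L1, L2, L3, L4, derivative_smul, derivative_add, derivative_mul,
      derivative_X, derivative_X_pow, derivative_C, smul_add, smul_smul,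
      smul_eq_C_mul, Nat.cast_ofNat, map_mul, map_div₀, map_neg, map_one, neg_mul]
  case refine_1 => ring
  case refine_2 => linear_combination (X * C Complex.I * p) * h
  case refine_3 => linear_combination C Complex.I * C Complex.I * X * p * h + derivative p * hI
  case refine_4 => ring
  case refine_5 => ring
  case refine_6 => ring
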